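/- For a linear decision function on subsets, f(S) = ∑_{i∈S} w_i + β₀ with threshold τ > β₀, backward selection removes elements in nondecreasing order of w_i (i.e., the element removed at each step is one with minimal weight among those remaining), and hence FindSIS returns the set of indices of the ℓ largest weights for the minimal ℓ such that the sum of the ℓ largest weights plus β₀ is at least τ. -/

import Mathlib

/-- For a linear decision function `f(S) = ∑_{i∈S} wᵢ + β₀`, backward
selection removes a minimal-weight remaining element at each step, and the set
returned by FindSIS consists of the `ℓ` indices of largest weight, for the
minimal `ℓ` meeting the sufficiency threshold. -/
theorem backselect_linear (p : ℕ) (w : Fin p → ℝ) (β₀ τ : ℝ)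
    (hτβ : β₀ < τ) (hsum : τ ≤ ∑ i, w i + β₀)
    (f : Finset (Fin p) → ℝ) (hf : ∀ S, f S = ∑ i ∈ S, w i + β₀)
    (T : ℕ → Finset (Fin p)) (r : ℕ → Fin p)
    (hT0 : T 0 = Finset.univ)
    (hmem : ∀ k < p, r k ∈ T k)
    (hTsucc : ∀ k < p, T (k + 1) = (T k).erase (r k))
    (hargmax : ∀ k < p, ∀ j ∈ T k, f ((T k).erase j) ≤ f ((T k).erase (r k)))
    (ℓ : ℕ) (hℓ1 : 1 ≤ ℓ) (hℓp : ℓ ≤ p)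
    (hsuff : τ ≤ f (T (p - ℓ)))
    (hminℓ : ∀ m, 1 ≤ m → m < ℓ → f (T (p - m)) < τ) :
    (∀ k < p, ∀ j ∈ T k, w (r k) ≤ w j) ∧
    (T (p - ℓ)).card = ℓ ∧
    (∀ i ∈ T (p - ℓ), ∀ j ∉ T (p - ℓ), w j ≤ w i) := by
  have part1 : ∀ k < p, ∀ j ∈ T k, w (r k) ≤ w j := by
    intro k hk j hj
    have h := hargmax k hk j hj
    rw [hf, hf, Finset.sum_erase_eq_sub hj, Finset.sum_erase_eq_sub (hmem k hk)] at h
    linarith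
  have hcard : ∀ k ≤ p, (T k).card = p - k := by
    intro k hk
    induction k with
    | zero => simp [hT0]
    | succ n ih =>
      have hn : n < p := hk
      rw [hTsucc n hn, Finset.card_erase_of_mem (hmem n hn), ih (le_of_lt hn)]
      omega
  have hsub : ∀ a b, a ≤ b → b ≤ p → T b ⊆ T a := by
    intro a b hab hbp
    induction b with
    | zero => simp at hab; simp [hab]
    | succ n ih =>
      rcases Nat.lt_or_ge a (n+1) with h | h
      · have hn : n < p := hbp
        rw [hTsucc n hn]
        exact (Finset.erase_subset _ _).trans (ih (by omega) (by omega))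
      · have : a = n + 1 := by omega
        simp [this]
  refine ⟨part1, by rw [hcard (p - ℓ) (by omega)]; omega, ?_⟩
  intro i hi j hj
  have hfind : ∀ n, n ≤ p → j ∉ T n → ∃ k < n, j ∈ T k ∧ j ∉ T (k+1) := by
    intro n hn hjn
    induction n with
    | zero => exact absurd (hT0 ▸ Finset.mem_univ j) hjn
    | succ m ih =>
      by_cases hm : j ∈ T m
      · exact ⟨m, Nat.lt_succ_self m, hm, hjn⟩
      · obtain ⟨k, hk, h1, h2⟩ := ih (by omega) hm
        exact ⟨k, by omega, h1, h2⟩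
  obtain ⟨k, hk, hjk, hjk1⟩ := hfind (p - ℓ) (by omega) hj
  have hkp : k < p := by omega
  have hjr : j = r k := by
    rw [hTsucc k hkp] at hjk1
    by_contra hne
    exact hjk1 (Finset.mem_erase.mpr ⟨hne, hjk⟩)
  have hik : i ∈ T k := hsub k (p - ℓ) (by omega) (by omega) hi
  rw [hjr]
  exact part1 k hkp i hik
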